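/- Let θ_q ∈ (0, 2π), m > 0, N ∈ ℕ, and a_j, b_j ∈ ℝ for j = 0,...,N. If the sequence ψ̄_k := (k² + m²)^{-1/4} ∑_{j=0}^N (a_j + e^{ikθ_q} b_j)(ik)^j, k ∈ ℤ, belongs to ℓ²(ℤ), then a_j = b_j = 0 for all j. -/

import Mathlib

open Complex Filter Finset

lemma exp_ne_one_aux (θq : ℝ) (hθ : θq ∈ Set.Ioo 0 (2 * Real.pi)) :
    Complex.exp (Complex.I * θq) ≠ 1 := by
  intro h
  rw [Complex.exp_eq_one_iff] at h
  obtain ⟨n, hn⟩ := h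
  have h3 : θq = (n : ℝ) * (2 * Real.pi) := by
    have := congrArg Complex.im hn
    simpa using this
  have hπ := Real.pi_pos
  obtain ⟨h0, h1⟩ := hθ
  rw [h3] at h0 h1
  have hn0 : (0 : ℝ) < (n : ℝ) := by nlinarith
  have hn1 : (n : ℝ) < 1 := by nlinarith
  have : (0 : ℤ) < n := by exact_mod_cast hn0
  have : (n : ℤ) < 1 := by exact_mod_cast hn1
  omega

lemma limit_aux (θq : ℝ) (hθ : θq ∈ Set.Ioo 0 (2 * Real.pi)) (a b : ℂ)
    (h : Tendsto (fun n : ℕ => a + Complex.exp (Complex.I * n * θq) * b) atTop (nhds 0)) :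
    a = 0 ∧ b = 0 := by
  have hexp := exp_ne_one_aux θq hθ
  have h2 : Tendsto (fun n : ℕ => a + Complex.exp (Complex.I * (n + 1 : ℕ) * θq) * b) atTop (nhds 0) :=
    h.comp (tendsto_add_atTop_nat 1)
  have h3 := h2.sub h
  rw [sub_zero] at h3
  have h4 : Tendsto (fun n : ℕ => Complex.exp (Complex.I * n * θq) * (b * (Complex.exp (Complex.I * θq) - 1))) atTop (nhds 0) := by
    apply h3.congr
    intro n
    push_cast
    have he : Complex.exp (Complex.I * (n + 1 : ℂ) * θq) = Complex.exp (Complex.I * n * θq) * Complex.exp (Complex.I * θq) := by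
      rw [← Complex.exp_add]; ring_nf
    rw [he]; ring
  have h5 : Tendsto (fun n : ℕ => ‖Complex.exp (Complex.I * n * θq) * (b * (Complex.exp (Complex.I * θq) - 1))‖) atTop (nhds 0) := by
    simpa using h4.norm
  have h6 : ∀ n : ℕ, ‖Complex.exp (Complex.I * n * θq) * (b * (Complex.exp (Complex.I * θq) - 1))‖ = ‖b * (Complex.exp (Complex.I * θq) - 1)‖ := by
    intro n
    rw [norm_mul]
    have : ‖Complex.exp (Complex.I * n * θq)‖ = 1 := by
      rw [Complex.norm_exp]
      have : (Complex.I * n * θq).re = 0 := by simp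
      rw [this, Real.exp_zero]
    rw [this, one_mul]
  rw [tendsto_congr h6] at h5
  have h7 : ‖b * (Complex.exp (Complex.I * θq) - 1)‖ = 0 := tendsto_nhds_unique tendsto_const_nhds h5
  have hb : b = 0 := by
    rcases mul_eq_zero.mp (norm_eq_zero.mp h7) with hb | he
    · exact hb
    · exact absurd (sub_eq_zero.mp he) hexp
  subst hb
  simp only [mul_zero, add_zero] at h
  exact ⟨tendsto_nhds_unique tendsto_const_nhds h, rfl⟩

lemma harm_aux (C : ℝ) (hC : 0 < C) (f : ℕ → ℝ) (hf : ∀ n, 1/(C*(n+1)) ≤ f n) :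
    ¬ Summable f := by
  intro h
  have h1 : Summable (fun n : ℕ => 1/(C*((n:ℝ)+1))) :=
    h.of_nonneg_of_le (fun n => by positivity) hf
  have h2 : Summable (fun n : ℕ => 1/((n:ℝ)+1)) := by
    have := h1.mul_left C
    apply this.congr
    intro n
    field_simp
  have h3 : Summable (fun n : ℕ => 1/((n+1 : ℕ):ℝ)) := by
    apply h2.congr; intro n; push_cast; ring
  have h4 : Summable (fun n : ℕ => 1/(n:ℝ)) := (summable_nat_add_iff 1).mp h3
  exact Real.not_summable_one_div_natCast h4

lemma rpow_half_lower (x m : ℝ) (hx : 0 ≤ x) (hm : 0 < m) :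
    1/(x+m) ≤ (x^2+m^2) ^ (-(1/2):ℝ) := by
  have h1 : (0:ℝ) < x^2+m^2 := by positivity
  have hsq : Real.sqrt (x^2+m^2) ≤ x + m := by
    rw [show x^2+m^2 = (x+m)^2 - 2*x*m by ring]
    calc Real.sqrt ((x+m)^2 - 2*x*m) ≤ Real.sqrt ((x+m)^2) := by
          apply Real.sqrt_le_sqrt; nlinarith
      _ = x + m := Real.sqrt_sq (by positivity)
  have hsq0 : 0 < Real.sqrt (x^2+m^2) := Real.sqrt_pos.mpr h1
  have : (x^2+m^2) ^ (-(1/2):ℝ) = 1 / Real.sqrt (x^2+m^2) := by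
    rw [Real.rpow_neg h1.le, ← Real.sqrt_eq_rpow, one_div]
  rw [this]
  exact one_div_le_one_div_of_le hsq0 hsq


lemma wsq (x : ℝ) (hx : 0 < x) : (x ^ (-(1/4):ℝ))^2 = x ^ (-(1/2):ℝ) := by
  rw [← Real.rpow_natCast (x ^ (-(1/4):ℝ)) 2, ← Real.rpow_mul hx.le]
  norm_num

lemma base_case (θq m : ℝ) (hθ : θq ∈ Set.Ioo 0 (2 * Real.pi)) (hm : 0 < m)
    (a0 b0 : ℝ) (ψ : ℤ → ℂ)
    (hψ : ∀ k : ℤ, ψ k = ((((k : ℝ) ^ 2 + m ^ 2) ^ (-(1 / 4 : ℝ)) : ℝ) : ℂ) *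
      ((a0 : ℂ) + Complex.exp (Complex.I * k * θq) * (b0 : ℂ)))
    (hsum : Summable fun k : ℤ => ‖ψ k‖ ^ 2) : a0 = 0 ∧ b0 = 0 := by
  have hxpos : ∀ x : ℝ, (0:ℝ) < x ^ 2 + m ^ 2 := fun x => by positivity
  set c : ℤ → ℂ := fun k => (a0 : ℂ) + Complex.exp (Complex.I * k * θq) * (b0 : ℂ) with hc
  have hnorm : ∀ k : ℤ, ‖ψ k‖^2 = (((k:ℝ)^2+m^2) ^ (-(1/2):ℝ)) * ‖c k‖^2 := by
    intro k
    rw [hψ k, norm_mul, mul_pow, Complex.norm_real, Real.norm_eq_abs,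
      abs_of_pos (Real.rpow_pos_of_pos (hxpos k) _), wsq _ (hxpos k)]
  -- first show b0 = 0
  have hb : b0 = 0 := by
    by_contra hb
    set d : ℝ := ‖(b0:ℂ) * (Complex.exp (Complex.I * θq) - 1)‖ with hd
    have hd0 : 0 < d := by
      rw [hd]
      apply norm_pos_iff.mpr
      apply mul_ne_zero
      · exact_mod_cast hb
      · exact sub_ne_zero.mpr (exp_ne_one_aux θq hθ)
    have hs2 : Summable (fun n : ℕ => ‖ψ (2*(n:ℤ))‖^2) :=
      hsum.comp_injective (fun x y h => by omega)
    have hs3 : Summable (fun n : ℕ => ‖ψ (2*(n:ℤ)+1)‖^2) :=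
      hsum.comp_injective (fun x y h => by omega)
    have hpair := hs2.add hs3
    have hlow : ∀ n : ℕ, (d^2/2) * (((2*(n:ℝ)+1)^2+m^2) ^ (-(1/2):ℝ)) ≤
        ‖ψ (2*(n:ℤ))‖^2 + ‖ψ (2*(n:ℤ)+1)‖^2 := by
      intro n
      have hdiff : c (2*n+1) - c (2*n) = Complex.exp (Complex.I * (2*(n:ℤ)) * θq) *
          ((b0:ℂ) * (Complex.exp (Complex.I * θq) - 1)) := by
        simp only [hc]
        push_cast
        have he : Complex.exp (Complex.I * (2*(n:ℂ)+1) * θq) =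
            Complex.exp (Complex.I * (2*(n:ℂ)) * θq) * Complex.exp (Complex.I * θq) := by
          rw [← Complex.exp_add]; ring_nf
        rw [he]; ring
      have hnd : ‖c (2*(n:ℤ)+1) - c (2*(n:ℤ))‖ = d := by
        rw [hdiff, norm_mul]
        have h9 : ‖Complex.exp (Complex.I * (2*(n:ℤ)) * θq)‖ = 1 := by
          rw [Complex.norm_exp]
          have : (Complex.I * (2*(n:ℤ)) * θq).re = 0 := by simp
          rw [this, Real.exp_zero]
        rw [h9, one_mul]
      have htri : d ≤ ‖c (2*(n:ℤ)+1)‖ + ‖c (2*(n:ℤ))‖ := hnd ▸ norm_sub_le _ _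
      have hsq : d^2/2 ≤ ‖c (2*(n:ℤ))‖^2 + ‖c (2*(n:ℤ)+1)‖^2 := by
        nlinarith [sq_nonneg (‖c (2*(n:ℤ)+1)‖ - ‖c (2*(n:ℤ))‖), norm_nonneg (c (2*(n:ℤ)+1)),
          norm_nonneg (c (2*(n:ℤ))), hd0.le, htri]
      have hW1 : (((2*(n:ℝ)+1)^2+m^2) ^ (-(1/2):ℝ)) ≤ (((2*(n:ℝ))^2+m^2) ^ (-(1/2):ℝ)) := by
        apply Real.rpow_le_rpow_of_nonpos (hxpos _) (by nlinarith [(Nat.cast_nonneg n : (0:ℝ) ≤ n)]) (by norm_num)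
      have hWpos : 0 < (((2*(n:ℝ)+1)^2+m^2) ^ (-(1/2):ℝ)) := Real.rpow_pos_of_pos (hxpos _) _
      have h1 := hnorm (2*(n:ℤ))
      have h2 := hnorm (2*(n:ℤ)+1)
      rw [h1, h2]
      push_cast
      nlinarith [hWpos, Real.rpow_pos_of_pos (hxpos (2*(n:ℝ))) (-(1/2):ℝ),
        norm_nonneg (c (2*(n:ℤ))), norm_nonneg (c (2*(n:ℤ)+1))]
    have hWs : Summable (fun n : ℕ => (d^2/2) * (((2*(n:ℝ)+1)^2+m^2) ^ (-(1/2):ℝ))) :=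
      hpair.of_nonneg_of_le (fun n => by positivity) hlow
    have hWs2 : Summable (fun n : ℕ => ((2*(n:ℝ)+1)^2+m^2) ^ (-(1/2):ℝ)) := by
      have h8 := hWs.mul_left (d^2/2)⁻¹
      apply h8.congr
      intro n
      field_simp
    apply harm_aux (3+m) (by linarith) _ ?_ hWs2
    intro n
    calc 1/((3+m)*((n:ℝ)+1)) ≤ 1/((2*(n:ℝ)+1)+m) := by
          apply one_div_le_one_div_of_le (by positivity) (by nlinarith [(Nat.cast_nonneg n : (0:ℝ) ≤ n), hm.le])
      _ ≤ ((2*(n:ℝ)+1)^2+m^2) ^ (-(1/2):ℝ) := rpow_half_lower _ _ (by positivity) hm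
  refine ⟨?_, hb⟩
  by_contra ha
  have hs1 : Summable (fun n : ℕ => ‖ψ ((n:ℤ))‖^2) :=
    hsum.comp_injective (fun x y h => by omega)
  have hWs2 : Summable (fun n : ℕ => ((n:ℝ)^2+m^2) ^ (-(1/2):ℝ)) := by
    have h8 := hs1.mul_left (a0^2)⁻¹
    apply h8.congr
    intro n
    have h7 := hnorm n
    have hcn : ‖c (n:ℤ)‖^2 = a0^2 := by
      simp only [hc, hb]
      push_cast
      rw [mul_zero, add_zero, Complex.norm_real, Real.norm_eq_abs, _root_.sq_abs]
    rw [h7, hcn]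
    push_cast
    have ha2 : a0^2 ≠ 0 := pow_ne_zero _ ha
    field_simp
  apply harm_aux (1+m) (by linarith) _ ?_ hWs2
  intro n
  calc 1/((1+m)*((n:ℝ)+1)) ≤ 1/((n:ℝ)+m) := by
        apply one_div_le_one_div_of_le (by positivity) (by nlinarith [(Nat.cast_nonneg n : (0:ℝ) ≤ n), hm.le])
    _ ≤ ((n:ℝ)^2+m^2) ^ (-(1/2):ℝ) := rpow_half_lower _ _ (by positivity) hm

lemma alg_aux (wc zM S cM ψn : ℂ) (hw : wc ≠ 0) (hzM : zM ≠ 0)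
    (h : ψn = wc * (S + cM * zM)) : cM = ψn * wc⁻¹ * zM⁻¹ - S * zM⁻¹ := by
  rw [h]; field_simp; ring

lemma ind_case (θq m : ℝ) (hθ : θq ∈ Set.Ioo 0 (2 * Real.pi)) (hm : 0 < m)
    (M : ℕ) (hM1 : 1 ≤ M) (a b : ℕ → ℝ) (ψ : ℤ → ℂ)
    (hψ : ∀ k : ℤ, ψ k = ((((k : ℝ) ^ 2 + m ^ 2) ^ (-(1 / 4 : ℝ)) : ℝ) : ℂ) *
      ∑ j ∈ Finset.range (M + 1),
        ((a j : ℂ) + Complex.exp (Complex.I * k * θq) * (b j : ℂ)) * (Complex.I * k) ^ j)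
    (hsum : Summable fun k : ℤ => ‖ψ k‖ ^ 2) : a M = 0 ∧ b M = 0 := by
  have hxpos : ∀ x : ℝ, (0:ℝ) < x ^ 2 + m ^ 2 := fun x => by positivity
  set w : ℕ → ℝ := fun n => ((n:ℝ)^2+m^2) ^ (-(1/4):ℝ) with hw
  have hwpos : ∀ n : ℕ, 0 < w n := fun n => Real.rpow_pos_of_pos (hxpos _) _
  set c : ℕ → ℕ → ℂ := fun j n => (a j : ℂ) + Complex.exp (Complex.I * n * θq) * (b j : ℂ) with hc
  -- norms of ψ restricted to ℕ tend to 0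
  have hs1 : Summable (fun n : ℕ => ‖ψ ((n:ℤ))‖^2) :=
    hsum.comp_injective (fun x y h => by omega)
  have hψ0 : Tendsto (fun n : ℕ => ‖ψ ((n:ℤ))‖) atTop (nhds 0) := by
    have h1 := hs1.tendsto_atTop_zero
    have h2 := (Real.continuous_sqrt.tendsto 0).comp h1
    simp only [Real.sqrt_zero] at h2
    apply h2.congr
    intro n
    simp [Real.sqrt_sq (norm_nonneg _)]
  set A : ℕ → ℂ := fun n => ψ n * (((w n : ℝ)) : ℂ)⁻¹ * ((Complex.I * (n:ℂ)) ^ M)⁻¹ with hA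
  set B : ℕ → ℂ := fun n =>
    (∑ j ∈ Finset.range M, c j n * (Complex.I * (n:ℂ)) ^ j) * ((Complex.I * (n:ℂ)) ^ M)⁻¹ with hB
  have hAB : ∀ n : ℕ, 1 ≤ n → c M n = A n - B n := by
    intro n hn
    have hz : (Complex.I * (n:ℂ)) ≠ 0 := by
      apply mul_ne_zero Complex.I_ne_zero
      exact_mod_cast (Nat.cast_ne_zero (R := ℂ)).mpr (by omega)
    have hzM : (Complex.I * (n:ℂ)) ^ M ≠ 0 := pow_ne_zero _ hz
    have hwne : (((w n : ℝ)) : ℂ) ≠ 0 := by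
      exact_mod_cast (hwpos n).ne'
    have h := hψ (n : ℤ)
    push_cast at h
    simp only [hA, hB, hc]
    exact alg_aux _ _ _ _ _ hwne hzM (by rw [h, Finset.sum_range_succ])
  have htB : Tendsto B atTop (nhds 0) := by
    rw [tendsto_zero_iff_norm_tendsto_zero]
    set K : ℝ := ∑ j ∈ Finset.range M, (|a j| + |b j|) with hK
    have hbound : ∀ n : ℕ, 1 ≤ n → ‖B n‖ ≤ K * (n:ℝ)⁻¹ := by
      intro n hn
      have hn1 : (1:ℝ) ≤ (n:ℝ) := by exact_mod_cast hn
      have hn0 : (0:ℝ) < (n:ℝ) := by linarith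
      have hzn : ‖Complex.I * (n:ℂ)‖ = (n:ℝ) := by
        rw [norm_mul, Complex.norm_I, one_mul, Complex.norm_natCast]
      have h1 : ‖B n‖ ≤ (∑ j ∈ Finset.range M, ‖c j n‖ * (n:ℝ)^j) * ((n:ℝ)^M)⁻¹ := by
        simp only [hB]
        rw [norm_mul, norm_inv, norm_pow, hzn]
        apply mul_le_mul_of_nonneg_right _ (by positivity)
        apply (norm_sum_le _ _).trans
        apply le_of_eq
        apply Finset.sum_congr rfl
        intro j hj
        rw [norm_mul, norm_pow, hzn]
      have hcb : ∀ j, ‖c j n‖ ≤ |a j| + |b j| := by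
        intro j
        simp only [hc]
        apply (norm_add_le _ _).trans
        rw [norm_mul]
        have he : ‖Complex.exp (Complex.I * n * θq)‖ = 1 := by
          rw [Complex.norm_exp]
          have : (Complex.I * (n:ℂ) * θq).re = 0 := by simp
          rw [this, Real.exp_zero]
        rw [he, one_mul, Complex.norm_real, Complex.norm_real]
        simp [Real.norm_eq_abs]
      have h2 : (∑ j ∈ Finset.range M, ‖c j n‖ * (n:ℝ)^j) ≤
          ∑ j ∈ Finset.range M, (|a j| + |b j|) * (n:ℝ)^(M-1) := by
        apply Finset.sum_le_sum
        intro j hj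
        have hjM : j ≤ M - 1 := by
          have := Finset.mem_range.mp hj
          omega
        apply mul_le_mul (hcb j) (pow_le_pow_right₀ hn1 hjM) (by positivity) (by positivity)
      calc ‖B n‖ ≤ (∑ j ∈ Finset.range M, ‖c j n‖ * (n:ℝ)^j) * ((n:ℝ)^M)⁻¹ := h1
        _ ≤ (∑ j ∈ Finset.range M, (|a j| + |b j|) * (n:ℝ)^(M-1)) * ((n:ℝ)^M)⁻¹ := by
            gcongr
        _ = K * ((n:ℝ)^(M-1) * ((n:ℝ)^M)⁻¹) := by rw [← Finset.sum_mul]; ring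
        _ = K * (n:ℝ)⁻¹ := by
            congr 1
            have : (n:ℝ)^M = (n:ℝ)^(M-1) * (n:ℝ) := by
              rw [← pow_succ]
              congr 1
              omega
            rw [this]
            field_simp
    apply squeeze_zero' (Filter.Eventually.of_forall (fun n => norm_nonneg _))
      ((eventually_ge_atTop 1).mono hbound)
    have := (tendsto_inv_atTop_nhds_zero_nat (𝕜 := ℝ)).const_mul K
    simpa using this
  have htA : Tendsto A atTop (nhds 0) := by
    rw [tendsto_zero_iff_norm_tendsto_zero]
    set Cm : ℝ := (1+m^2) ^ ((1/4):ℝ) with hCm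
    have hbound : ∀ n : ℕ, 1 ≤ n → ‖A n‖ ≤ Cm * ‖ψ (n:ℤ)‖ := by
      intro n hn
      have hn1 : (1:ℝ) ≤ (n:ℝ) := by exact_mod_cast hn
      have hn0 : (0:ℝ) < (n:ℝ) := by linarith
      have hzn : ‖Complex.I * (n:ℂ)‖ = (n:ℝ) := by
        rw [norm_mul, Complex.norm_I, one_mul, Complex.norm_natCast]
      have hCm0 : (0:ℝ) ≤ Cm := Real.rpow_nonneg (by positivity) _
      have hkey : ((n:ℝ)^2+m^2) ^ ((1/4):ℝ) ≤ Cm * (n:ℝ)^M := by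
        have hnsq : (1:ℝ) ≤ (n:ℝ)^2 := one_le_pow₀ hn1
        calc ((n:ℝ)^2+m^2) ^ ((1/4):ℝ) ≤ ((1+m^2)*(n:ℝ)^2) ^ ((1/4):ℝ) := by
              apply Real.rpow_le_rpow (by positivity) (by nlinarith [sq_nonneg m]) (by norm_num)
          _ = Cm * ((n:ℝ)^2) ^ ((1/4):ℝ) := Real.mul_rpow (by positivity) (by positivity)
          _ ≤ Cm * (n:ℝ) := by
              apply mul_le_mul_of_nonneg_left _ hCm0
              have e : ((n:ℝ)^2) ^ ((1/4):ℝ) = (n:ℝ) ^ ((1/2):ℝ) := by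
                rw [← Real.rpow_natCast (n:ℝ) 2, ← Real.rpow_mul (Nat.cast_nonneg n)]
                norm_num
              rw [e]
              calc (n:ℝ) ^ ((1/2):ℝ) ≤ (n:ℝ) ^ ((1:ℝ)) :=
                    Real.rpow_le_rpow_of_exponent_le hn1 (by norm_num)
                _ = (n:ℝ) := Real.rpow_one _
          _ ≤ Cm * (n:ℝ)^M :=
              mul_le_mul_of_nonneg_left (le_self_pow₀ hn1 (by omega)) hCm0
      have hwinv : (w n)⁻¹ = ((n:ℝ)^2+m^2) ^ ((1/4):ℝ) := by
        simp only [hw]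
        rw [Real.rpow_neg (hxpos _).le, inv_inv]
      have hAn : ‖A n‖ = ‖ψ (n:ℤ)‖ * (w n)⁻¹ * (((n:ℝ)^M)⁻¹) := by
        simp only [hA]
        rw [norm_mul, norm_mul, norm_inv, norm_inv, norm_pow, hzn, Complex.norm_real,
          Real.norm_eq_abs, abs_of_pos (hwpos n)]
      have h5 : ((n:ℝ)^2+m^2) ^ ((1/4):ℝ) * (((n:ℝ)^M)⁻¹) ≤ Cm := by
        rw [← div_eq_mul_inv]
        exact (div_le_iff₀ (by positivity)).mpr hkey
      rw [hAn, hwinv]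
      calc ‖ψ (n:ℤ)‖ * (((n:ℝ)^2+m^2) ^ ((1/4):ℝ)) * (((n:ℝ)^M)⁻¹)
          = ‖ψ (n:ℤ)‖ * ((((n:ℝ)^2+m^2) ^ ((1/4):ℝ)) * (((n:ℝ)^M)⁻¹)) := by ring
        _ ≤ ‖ψ (n:ℤ)‖ * Cm := mul_le_mul_of_nonneg_left h5 (norm_nonneg _)
        _ = Cm * ‖ψ (n:ℤ)‖ := mul_comm _ _
    apply squeeze_zero' (Filter.Eventually.of_forall (fun n => norm_nonneg _))
      ((eventually_ge_atTop 1).mono hbound)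
    have := hψ0.const_mul Cm
    simpa using this
  have hfinal : Tendsto (fun n : ℕ => c M n) atTop (nhds 0) := by
    apply Tendsto.congr' _ (by simpa using htA.sub htB)
    filter_upwards [eventually_ge_atTop 1] with n hn
    exact (hAB n hn).symm
  have := limit_aux θq hθ (a M) (b M) (by simpa [hc] using hfinal)
  exact ⟨by exact_mod_cast this.1, by exact_mod_cast this.2⟩


/-- If `θ_q ∈ (0, 2π)`, `m > 0` and the sequence
`ψ̄_k = (k² + m²)^(-1/4) ∑_{j=0}^N (a_j + e^{i k θ_q} b_j)(i k)^j`, `k ∈ ℤ`,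
is square-summable, then all coefficients `a_j, b_j` vanish. -/
theorem delta_derivative_sequence_not_l2 (θq m : ℝ)
    (hθ : θq ∈ Set.Ioo 0 (2 * Real.pi)) (hm : 0 < m)
    (N : ℕ) (a b : ℕ → ℝ)
    (ψ : ℤ → ℂ)
    (hψ : ∀ k : ℤ, ψ k =
      ((((k : ℝ) ^ 2 + m ^ 2) ^ (-(1 / 4 : ℝ)) : ℝ) : ℂ) *
        ∑ j ∈ Finset.range (N + 1),
          ((a j : ℂ) + Complex.exp (Complex.I * k * θq) * (b j : ℂ)) *
            (Complex.I * k) ^ j)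
    (hsum : Summable fun k : ℤ => ‖ψ k‖ ^ 2) :
    ∀ j ≤ N, a j = 0 ∧ b j = 0 := by
  have key : ∀ M, M ≤ N → (∀ i, M < i → i ≤ N → a i = 0 ∧ b i = 0) →
      a M = 0 ∧ b M = 0 := by
    intro M hM hz
    have hψM : ∀ k : ℤ, ψ k = ((((k : ℝ) ^ 2 + m ^ 2) ^ (-(1 / 4 : ℝ)) : ℝ) : ℂ) *
        ∑ j ∈ Finset.range (M + 1),
          ((a j : ℂ) + Complex.exp (Complex.I * k * θq) * (b j : ℂ)) * (Complex.I * k) ^ j := by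
      intro k
      rw [hψ k]
      congr 1
      apply (Finset.sum_subset ?_ ?_).symm
      · intro x hx
        simp only [Finset.mem_range] at *
        omega
      · intro x hx hx2
        simp only [Finset.mem_range] at hx hx2
        obtain ⟨ha, hb⟩ := hz x (by omega) (by omega)
        rw [ha, hb]
        simp
    rcases Nat.eq_zero_or_pos M with h0 | h1
    · subst h0
      exact base_case θq m hθ hm (a 0) (b 0) ψ (fun k => by rw [hψM k]; simp) hsum
    · exact ind_case θq m hθ hm M h1 a b ψ hψM hsum
  have all : ∀ d i, i ≤ N → N ≤ i + d → a i = 0 ∧ b i = 0 := by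
    intro d
    induction d with
    | zero =>
      intro i hi hi2
      have hiN : i = N := by omega
      subst hiN
      exact key i le_rfl (fun i' h1 h2 => absurd (h1.trans_le h2) (lt_irrefl _))
    | succ d ih =>
      intro i hi hi2
      exact key i hi (fun i' h1 h2 => ih i' h2 (by omega))
  intro j hj
  exact all N j hj (by omega)
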